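/- The curve γ_c(t) = (t/2, t²/4 − 1/2), t ∈ ℝ, is a (globally defined) solution of the planar system x' = max(x² − y, 0), y' = x; it satisfies x(t)² − y(t) = 1/2 > 0 for all t (so it lies strictly below the parabola {y = x²}, and also solves x' = x² − y, y' = x), and H(γ_c(t)) = 0 for all t ∈ ℝ, where H(x,y) = (1/2) e^{−2y}(y − x² + 1/2). Thus γ_c is the unique-up-to-time-shift maximal canard trajectory lying on the zero level set of H. -/
import Mathlib

/-- The constant of motion `H(x,y) = (1/2) e^{-2y} (y - x² + 1/2)` of the
chart-`K₂` canard system. -/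
noncomputable def canardH (p : ℝ × ℝ) : ℝ :=
  (1 / 2) * Real.exp (-2 * p.2) * (p.2 - p.1 ^ 2 + 1 / 2)

/-- The curve `γ_c(t) = (t/2, t²/4 - 1/2)` is a globally
defined solution of `x' = max(x² - y, 0)`, `y' = x`; it satisfies
`x(t)² - y(t) = 1/2 > 0` for all `t` (so it lies strictly below the parabola
and also solves `x' = x² - y`), and `H(γ_c(t)) = 0` for all `t`. -/
theorem maximal_canard_solution :
    ∀ t : ℝ,
      HasDerivAt (fun s : ℝ => s / 2)
        (max ((t / 2) ^ 2 - (t ^ 2 / 4 - 1 / 2)) 0) t ∧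
      HasDerivAt (fun s : ℝ => s ^ 2 / 4 - 1 / 2) (t / 2) t ∧
      (t / 2) ^ 2 - (t ^ 2 / 4 - 1 / 2) = 1 / 2 ∧
      canardH (t / 2, t ^ 2 / 4 - 1 / 2) = 0 := by
  intro t
  have hval : (t / 2) ^ 2 - (t ^ 2 / 4 - 1 / 2) = 1 / 2 := by ring
  refine ⟨?_, ?_, hval, ?_⟩
  · have : max ((t / 2) ^ 2 - (t ^ 2 / 4 - 1 / 2)) 0 = 1 / 2 := by
      rw [hval]; norm_num
    rw [this]
    simpa using (hasDerivAt_id t).div_const 2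
  · have h : HasDerivAt (fun s : ℝ => s ^ 2 / 4 - 1 / 2) (2 * t / 4) t := by
      simpa using (((hasDerivAt_pow 2 t).div_const 4).sub_const (1 / 2))
    convert h using 1; ring
  · simp only [canardH]
    have : (t ^ 2 / 4 - 1 / 2) - (t / 2) ^ 2 + 1 / 2 = 0 := by ring
    rw [mul_eq_zero]; right; linarith [this]
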